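/- Let R be a Bézout domain of finite Krull dimension. Then the Krull dimension of the polynomial ring R[X] equals the Krull dimension of R plus one, and for every prime ideal P of R of height n, the extended prime ideal PR[X] has height n in R[X]. -/

import Mathlib

open Polynomial

/-- The height of an ideal: the infimum of the heights (in the prime spectrum)
of the prime ideals containing it. -/
noncomputable def idealHeight {A : Type*} [CommRing A] (I : Ideal A) : ℕ∞ :=
  ⨅ (P : PrimeSpectrum A) (_ : I ≤ P.asIdeal), Order.height P

/-- An ideal `I` of a commutative ring is a set theoretic complete intersection if there
exist `n` elements, with `n` the height of `I`, such that the radical of `I` equals the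
radical of the ideal they generate. -/
def IsSTCI {A : Type*} [CommRing A] (I : Ideal A) : Prop :=
  ∃ n : ℕ, (n : ℕ∞) = idealHeight I ∧
    ∃ a : Fin n → A, I.radical = (Ideal.span (Set.range a)).radical


section Fiber
variable {D : Type*} [CommRing D] [IsDomain D]

lemma polyLoc :
    letI : Algebra D[X] (FractionRing D)[X] :=
      (Polynomial.mapRingHom (algebraMap D (FractionRing D))).toAlgebra
    IsLocalization ((nonZeroDivisors D).map (C : D →+* D[X])) ((FractionRing D)[X]) := by
  letI : Algebra D[X] (FractionRing D)[X] :=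
    (Polynomial.mapRingHom (algebraMap D (FractionRing D))).toAlgebra
  have halg : (algebraMap D[X] (FractionRing D)[X]) =
      Polynomial.mapRingHom (algebraMap D (FractionRing D)) := rfl
  constructor
  constructor
  · rintro ⟨y, d, hd, rfl⟩
    rw [halg, coe_mapRingHom, Polynomial.map_C]
    refine (Polynomial.isUnit_C).mpr (isUnit_iff_ne_zero.mpr ?_)
    simpa using nonZeroDivisors.ne_zero hd
  · intro z
    obtain ⟨b, hb⟩ := IsLocalization.integerNormalization_map_to_map (nonZeroDivisors D) z
    refine ⟨⟨IsLocalization.integerNormalization (nonZeroDivisors D) z,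
      ⟨C (b : D), ⟨(b : D), b.2, rfl⟩⟩⟩, ?_⟩
    simp only [halg, coe_mapRingHom, Polynomial.map_C]
    rw [hb, ← algebraMap_smul (FractionRing D) (b : D) z, smul_eq_C_mul, mul_comm]
  · intro f g h
    refine ⟨1, ?_⟩
    have hinj : Function.Injective (algebraMap D[X] (FractionRing D)[X]) := by
      rw [halg]
      exact fun p q hpq => Polynomial.map_injective _
        (IsFractionRing.injective D (FractionRing D)) (by simpa using hpq)
    simp [hinj h]

lemma fiber_lemma (q₁ q₂ : Ideal D[X]) (h1 : q₁.IsPrime) (h2 : q₂.IsPrime) (hlt : q₁ < q₂)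
    (hc1 : q₁.comap (C : D →+* D[X]) = ⊥) (hc2 : q₂.comap (C : D →+* D[X]) = ⊥) :
    q₁ = ⊥ := by
  letI : Algebra D[X] (FractionRing D)[X] :=
    (Polynomial.mapRingHom (algebraMap D (FractionRing D))).toAlgebra
  haveI := polyLoc (D := D)
  set M : Submonoid D[X] := (nonZeroDivisors D).map (C : D →+* D[X]) with hM
  have hdisj : ∀ q : Ideal D[X], q.comap (C : D →+* D[X]) = ⊥ → Disjoint (M : Set D[X]) (q : Set D[X]) := by
    intro q hq
    rw [Set.disjoint_left]
    rintro _ ⟨d, hd, rfl⟩ hdq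
    have : d ∈ q.comap (C : D →+* D[X]) := hdq
    rw [hq] at this
    exact nonZeroDivisors.ne_zero hd (by simpa using this)
  set E₁ := q₁.map (algebraMap D[X] (FractionRing D)[X]) with hE1
  set E₂ := q₂.map (algebraMap D[X] (FractionRing D)[X]) with hE2
  have hcm1 : E₁.comap (algebraMap D[X] (FractionRing D)[X]) = q₁ :=
    IsLocalization.comap_map_of_isPrime_disjoint M _ h1 (hdisj q₁ hc1)
  have hcm2 : E₂.comap (algebraMap D[X] (FractionRing D)[X]) = q₂ :=
    IsLocalization.comap_map_of_isPrime_disjoint M _ h2 (hdisj q₂ hc2)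
  have hp1 : E₁.IsPrime := IsLocalization.isPrime_of_isPrime_disjoint M _ q₁ h1 (hdisj q₁ hc1)
  have hp2 : E₂.IsPrime := IsLocalization.isPrime_of_isPrime_disjoint M _ q₂ h2 (hdisj q₂ hc2)
  have hElt : E₁ < E₂ := by
    refine lt_of_le_of_ne (Ideal.map_mono hlt.le) fun h => hlt.ne ?_
    rw [← hcm1, ← hcm2, h]
  have hEbot : E₁ = ⊥ := by
    by_contra hne
    haveI := hp1
    have hmax : E₁.IsMaximal := IsPrime.to_maximal_ideal hne
    exact hElt.ne (hmax.eq_of_le hp2.ne_top hElt.le)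
  have hinj : Function.Injective (algebraMap D[X] (FractionRing D)[X]) :=
    fun p q hpq => Polynomial.map_injective _ (IsFractionRing.injective D (FractionRing D)) hpq
  rw [← hcm1, hEbot]
  exact (Ideal.comap_bot_of_injective _ hinj)

end Fiber

section LemA
variable {R : Type*} [CommRing R]

/-- In any commutative ring, two distinct comparable primes of `R[X]` cannot have the
same contraction; more precisely the smaller one is then the extension of the contraction. -/
lemma lower_eq_ext (Q₁ Q₂ : Ideal R[X]) (h1 : Q₁.IsPrime) (h2 : Q₂.IsPrime) (hlt : Q₁ < Q₂)
    (heq : Q₁.comap (C : R →+* R[X]) = Q₂.comap (C : R →+* R[X])) :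
    Q₁ = (Q₁.comap (C : R →+* R[X])).map (C : R →+* R[X]) := by
  set P : Ideal R := Q₁.comap (C : R →+* R[X]) with hP
  haveI hPp : P.IsPrime := Ideal.IsPrime.comap _
  set σ : R[X] →+* (R ⧸ P)[X] := Polynomial.mapRingHom (Ideal.Quotient.mk P) with hσ
  have hσsurj : Function.Surjective σ :=
    Polynomial.map_surjective _ Ideal.Quotient.mk_surjective
  have hker : RingHom.ker σ = P.map (C : R →+* R[X]) := by
    rw [hσ, Polynomial.ker_mapRingHom, Ideal.mk_ker]
  have hle1 : RingHom.ker σ ≤ Q₁ := by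
    rw [hker]; exact Ideal.map_le_iff_le_comap.mpr le_rfl
  have hle2 : RingHom.ker σ ≤ Q₂ := by
    rw [hker]; exact Ideal.map_le_iff_le_comap.mpr (le_of_eq heq)
  set q₁ := Q₁.map σ with hq1
  set q₂ := Q₂.map σ with hq2
  have hcm1 : q₁.comap σ = Q₁ := by
    rw [hq1, Ideal.comap_map_of_surjective σ hσsurj, ← RingHom.ker_eq_comap_bot,
      sup_eq_left.mpr hle1]
  have hcm2 : q₂.comap σ = Q₂ := by
    rw [hq2, Ideal.comap_map_of_surjective σ hσsurj, ← RingHom.ker_eq_comap_bot,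
      sup_eq_left.mpr hle2]
  have hp1 : q₁.IsPrime := Ideal.map_isPrime_of_surjective hσsurj hle1
  have hp2 : q₂.IsPrime := Ideal.map_isPrime_of_surjective hσsurj hle2
  have hqlt : q₁ < q₂ := by
    refine lt_of_le_of_ne (Ideal.map_mono hlt.le) fun h => hlt.ne ?_
    rw [← hcm1, ← hcm2, h]
  have hcc : ∀ (Q : Ideal R[X]), Q.comap (C : R →+* R[X]) = P →
      (Q.map σ).comap σ = Q → (Q.map σ).comap (C : (R ⧸ P) →+* (R ⧸ P)[X]) = ⊥ := by
    intro Q hQ hcm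
    ext d
    obtain ⟨r, rfl⟩ := Ideal.Quotient.mk_surjective d
    have hCr : (C (Ideal.Quotient.mk P r) : (R ⧸ P)[X]) = σ (C r) := by simp [hσ]
    simp only [Ideal.mem_comap, Ideal.mem_bot, hCr]
    constructor
    · intro h
      have h2 : C r ∈ (Q.map σ).comap σ := h
      rw [hcm] at h2
      exact Ideal.Quotient.eq_zero_iff_mem.mpr (hQ ▸ Ideal.mem_comap.mpr h2)
    · intro h
      rw [Ideal.Quotient.eq_zero_iff_mem] at h
      have : C r ∈ Q := by
        have : r ∈ Q.comap (C : R →+* R[X]) := hQ ▸ h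
        exact this
      exact Ideal.mem_map_of_mem σ this
  have hbot : q₁ = ⊥ :=
    fiber_lemma q₁ q₂ hp1 hp2 hqlt (hcc Q₁ rfl hcm1) (hcc Q₂ heq.symm hcm2)
  rw [← hcm1, hbot, ← RingHom.ker_eq_comap_bot, hker]

end LemA
section Bezout
variable {R : Type*} [CommRing R] [IsDomain R] [IsBezout R]

lemma bezout_key (Q : Ideal R[X]) (hQ : Q.IsPrime) (P : Ideal R) (hP : P.IsPrime)
    (hle : Q ≤ P.map (C : R →+* R[X])) :
    Q = (Q.comap (C : R →+* R[X])).map (C : R →+* R[X]) := by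
  classical
  refine le_antisymm ?_ Ideal.map_comap_le
  intro f hf
  rw [Ideal.mem_map_C_iff]
  intro k
  rw [Ideal.mem_comap]
  -- the ideal of coefficients of f
  set n := f.natDegree with hn
  set I : Ideal R := Ideal.span ((Finset.range (n + 1)).image f.coeff : Finset R) with hI
  have hIfg : I.FG := ⟨_, rfl⟩
  obtain ⟨d, hd⟩ := (IsBezout.isPrincipal_of_FG I hIfg)
  have hd' : I = Ideal.span {d} := hd
  have hcoeffI : ∀ i, f.coeff i ∈ I := by
    intro i
    by_cases hi : i ≤ n
    · exact Ideal.subset_span (by simp; exact ⟨i, by omega, rfl⟩)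
    · rw [f.coeff_eq_zero_of_natDegree_lt (by omega)]
      exact I.zero_mem
  by_cases hd0 : d = 0
  · -- then f = 0
    have : f.coeff k = 0 := by
      have := hcoeffI k
      rw [hd', hd0, Ideal.span_singleton_eq_bot.mpr rfl] at this
      simpa using this
    rw [this, map_zero]; exact Q.zero_mem
  -- choose cofactors
  have hc : ∀ i, ∃ c : R, f.coeff i = d * c := by
    intro i
    have := hcoeffI i
    rw [hd', Ideal.mem_span_singleton] at this
    obtain ⟨c, hc⟩ := this
    exact ⟨c, hc⟩
  choose c hcspec using hc
  have hCd : C d ∈ Q := by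
    by_contra hCdQ
    -- f = C d * g with g primitive
    set g : R[X] := ∑ i ∈ Finset.range (n + 1), Polynomial.monomial i (c i) with hg
    have hfg : f = C d * g := by
      conv_lhs => rw [f.as_sum_range' (n + 1) (by omega)]
      rw [hg, Finset.mul_sum]
      refine Finset.sum_congr rfl fun i _ => ?_
      rw [← Polynomial.C_mul_X_pow_eq_monomial, ← Polynomial.C_mul_X_pow_eq_monomial,
        ← mul_assoc, ← Polynomial.C_mul, ← hcspec]
    have hgQ : g ∈ Q := ((hQ.mem_or_mem (hfg ▸ hf)).resolve_left hCdQ)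
    have hgcoeff : ∀ i, i ≤ n → c i ∈ P := by
      intro i hi
      have := Ideal.mem_map_C_iff.mp (hle hgQ) i
      rwa [hg, Polynomial.finset_sum_coeff, Finset.sum_eq_single i
        (fun j _ hj => Polynomial.coeff_monomial_of_ne _ hj.symm)
        (fun hni => absurd (Finset.mem_range.mpr (by omega)) hni),
        Polynomial.coeff_monomial, if_pos rfl] at this
    -- d ∈ span{d} * J where J is span of the c i
    set J : Ideal R := Ideal.span ((Finset.range (n + 1)).image c : Finset R) with hJ
    have hJP : J ≤ P := by
      rw [hJ, Ideal.span_le]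
      rintro x hx
      simp only [Finset.coe_image, Set.mem_image, Finset.mem_coe, Finset.mem_range] at hx
      obtain ⟨i, hi, rfl⟩ := hx
      exact hgcoeff i (by omega)
    have hIle : I ≤ Ideal.span {d} * J := by
      rw [hI, Ideal.span_le]
      rintro x hx
      simp only [Finset.coe_image, Set.mem_image, Finset.mem_coe, Finset.mem_range] at hx
      obtain ⟨i, hi, rfl⟩ := hx
      rw [hcspec i]
      exact Ideal.mul_mem_mul (Ideal.mem_span_singleton_self d)
        (Ideal.subset_span (by simp; exact ⟨i, by omega, rfl⟩))
    have hdmem : d ∈ Ideal.span {d} * J := hIle (hd ▸ Ideal.mem_span_singleton_self d)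
    rw [Ideal.mem_span_singleton_mul] at hdmem
    obtain ⟨z, hzJ, hz⟩ := hdmem
    have h1 : (1 : R) = z := mul_left_cancel₀ hd0 (by rw [mul_one, hz])
    exact hP.ne_top (Ideal.eq_top_iff_one P |>.mpr (hJP (h1 ▸ hzJ)))
  -- conclude
  obtain ⟨e, he⟩ := Ideal.mem_span_singleton.mp (hd' ▸ hcoeffI k)
  rw [he, map_mul]
  exact Q.mul_mem_right _ hCd

end Bezout

section OrderLayer

variable {R : Type*} [CommRing R]

lemma comap_map_C' (I : Ideal R) :
    (I.map (C : R →+* R[X])).comap (C : R →+* R[X]) = I := by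
  ext x
  simp only [Ideal.mem_comap, Ideal.mem_map_C_iff]
  constructor
  · intro h
    simpa using h 0
  · intro h n
    cases n with
    | zero => simpa using h
    | succ n => simp [coeff_C]

/-- restriction map on spectra -/
noncomputable def resS (Q : PrimeSpectrum R[X]) : PrimeSpectrum R :=
  ⟨Q.asIdeal.comap (C : R →+* R[X]), Ideal.IsPrime.comap _ (hK := Q.2)⟩

/-- extension map on spectra -/
noncomputable def extS (P : PrimeSpectrum R) : PrimeSpectrum R[X] :=
  ⟨P.asIdeal.map (C : R →+* R[X]), (Ideal.isPrime_map_C_iff_isPrime _).mpr P.2⟩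

lemma res_ext (P : PrimeSpectrum R) : resS (extS P) = P :=
  PrimeSpectrum.ext (comap_map_C' P.asIdeal)

lemma resS_mono : Monotone (resS (R := R)) := fun _ _ h => Ideal.comap_mono h

lemma extS_strictMono : StrictMono (extS (R := R)) := by
  intro P P' h
  refine lt_of_le_of_ne (Ideal.map_mono h.le) fun hEq => h.ne ?_
  have := congrArg resS hEq
  rwa [res_ext, res_ext] at this

/-- `Q` is an extended prime -/
def ExtP (Q : PrimeSpectrum R[X]) : Prop := Q = extS (resS Q)

variable [IsDomain R] [IsBezout R]

lemma extP_of_le_ext {Q : PrimeSpectrum R[X]} {P : Ideal R} (hP : P.IsPrime)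
    (h : Q.asIdeal ≤ P.map (C : R →+* R[X])) : ExtP Q :=
  PrimeSpectrum.ext (bezout_key Q.asIdeal Q.2 P hP h)

lemma extP_of_lt_extP {Q Q' : PrimeSpectrum R[X]} (h : Q ≤ Q') (hQ' : ExtP Q') : ExtP Q :=
  extP_of_le_ext (resS Q').2 (le_of_le_of_eq h (congrArg PrimeSpectrum.asIdeal hQ'))

lemma res_strict_of_extP {Q Q' : PrimeSpectrum R[X]} (h : Q < Q') (hQ : ExtP Q) (hQ' : ExtP Q') :
    resS Q < resS Q' := by
  refine lt_of_le_of_ne (resS_mono h.le) fun hEq => h.ne ?_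
  rw [hQ, hQ', hEq]

lemma res_strict_of_not_extP {Q Q' : PrimeSpectrum R[X]} (hQQ' : Q < Q') (hQ : ¬ ExtP Q) :
    resS Q < resS Q' := by
  refine lt_of_le_of_ne (resS_mono hQQ'.le) fun hEq => hQ ?_
  exact PrimeSpectrum.ext (lower_eq_ext Q.asIdeal Q'.asIdeal Q.2 Q'.2
    (by exact_mod_cast hQQ') (congrArg PrimeSpectrum.asIdeal hEq))

lemma height_ext (P : PrimeSpectrum R) : Order.height (extS P) = Order.height P := by
  refine le_antisymm ?_ (Order.height_le_height_apply_of_strictMono _ extS_strictMono P)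
  refine Order.height_le fun p hlast => ?_
  -- map the series by resS
  have hext : ∀ i, ExtP (p i) := by
    intro i
    refine extP_of_le_ext P.2 ?_
    have : p i ≤ p.last := p.monotone (Fin.le_last i)
    rw [hlast] at this
    exact this
  let p' : LTSeries (PrimeSpectrum R) :=
    ⟨p.length, fun i => resS (p i), fun i => res_strict_of_extP (p.step i) (hext _) (hext _)⟩
  have hl : p'.last = P := by
    show resS (p.last) = P
    rw [hlast, res_ext]
  calc (p.length : ℕ∞) = p'.length := rfl
    _ ≤ Order.height p'.last := Order.length_le_height_last
    _ = Order.height P := by rw [hl]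

end OrderLayer

section Dim
variable {R : Type*} [CommRing R]

/-- the prime `P R[X] + (X)` -/
noncomputable def upperS (P : PrimeSpectrum R) : PrimeSpectrum R[X] :=
  ⟨RingHom.ker ((Ideal.Quotient.mk P.asIdeal).comp (Polynomial.constantCoeff)),
    haveI := P.2; RingHom.ker_isPrime _⟩

lemma extS_lt_upperS (P : PrimeSpectrum R) : extS P < upperS P := by
  constructor
  · intro f hf
    have hco : ∀ n, f.coeff n ∈ P.asIdeal := Ideal.mem_map_C_iff.mp hf
    show (Ideal.Quotient.mk P.asIdeal) (Polynomial.constantCoeff f) = 0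
    rw [Ideal.Quotient.eq_zero_iff_mem]
    exact hco 0
  · intro hcon
    have hX : (X : R[X]) ∈ (upperS P).asIdeal := by
      show (Ideal.Quotient.mk P.asIdeal) (Polynomial.constantCoeff X) = 0
      simp
    have := Ideal.mem_map_C_iff.mp (hcon hX) 1
    simp at this
    exact P.2.ne_top (Ideal.eq_top_iff_one _ |>.mpr this)

variable [IsDomain R] [IsBezout R]

lemma chain_bound (p : LTSeries (PrimeSpectrum R)) :
    ((p.length : ℕ∞) : WithBot ℕ∞) + 1 ≤ ringKrullDim R[X] := by
  let q : LTSeries (PrimeSpectrum R[X]) :=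
    (p.map extS extS_strictMono).snoc (upperS p.last)
      (by rw [LTSeries.last_map]; exact extS_lt_upperS _)
  have hq : q.length = p.length + 1 := by simp [q, RelSeries.snoc, RelSeries.append, RelSeries.singleton]
  have := Order.LTSeries.length_le_krullDim q
  rw [hq] at this
  refine le_trans (le_of_eq ?_) this
  push_cast
  rfl

lemma natcast_wb_le {a b : ℕ} : (a : WithBot ℕ∞) ≤ (b : WithBot ℕ∞) ↔ a ≤ b :=
  Nat.cast_le

lemma dcast (a : ℕ) : ((a : ℕ∞) : WithBot ℕ∞) = (a : WithBot ℕ∞) := by push_cast; rfl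

lemma dim_ge (hfin : ringKrullDim R ≠ ⊤) : ringKrullDim R + 1 ≤ ringKrullDim R[X] := by
  have hbot : ringKrullDim R ≠ ⊥ := by
    intro h
    have := Order.krullDim_nonneg (α := PrimeSpectrum R)
    rw [ringKrullDim] at h
    rw [h] at this
    exact absurd this (by simp)
  obtain ⟨d, hd⟩ := WithBot.ne_bot_iff_exists.mp hbot
  have hdtop : d ≠ ⊤ := by rintro rfl; exact hfin hd.symm
  obtain ⟨m, rfl⟩ := WithTop.ne_top_iff_exists.mp hdtop
  have hd' : ((m : ℕ) : WithBot ℕ∞) = ringKrullDim R := by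
    rw [← hd]; push_cast; rfl
  -- exists a chain of length m
  have hex : ∃ p : LTSeries (PrimeSpectrum R), p.length = m := by
    by_contra hno
    push_neg at hno
    have hlt : ∀ p : LTSeries (PrimeSpectrum R), p.length < m := by
      intro p
      have h1 := Order.LTSeries.length_le_krullDim p
      rw [← ringKrullDim, ← hd'] at h1
      exact lt_of_le_of_ne (natcast_wb_le.mp h1) (hno p)
    rcases Nat.eq_zero_or_pos m with rfl | hm
    · exact absurd (hlt (RelSeries.singleton _ (Nonempty.some inferInstance))) (by simp)
    · have hle : ringKrullDim R ≤ ((m - 1 : ℕ) : WithBot ℕ∞) := by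
        rw [ringKrullDim, Order.krullDim_eq_iSup_length, ← dcast]
        rw [WithBot.coe_le_coe]
        exact iSup_le fun p => Nat.cast_le.mpr (Nat.le_sub_one_of_lt (hlt p))
      rw [← hd'] at hle
      have := natcast_wb_le.mp hle
      omega
  obtain ⟨p, hp⟩ := hex
  have hcb := chain_bound p
  rw [hp] at hcb
  rw [← hd']
  exact le_trans (le_of_eq (by rw [dcast])) hcb

lemma dim_le : ringKrullDim R[X] ≤ ringKrullDim R + 1 := by
  classical
  rw [ringKrullDim, ringKrullDim, Order.krullDim_eq_iSup_length, Order.krullDim_eq_iSup_length,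
    ← WithBot.coe_one, ← WithBot.coe_add, WithBot.coe_le_coe]
  refine iSup_le fun q => ?_
  rcases hn : q.length with _ | m
  · simp
  · -- length m + 1
    have hidx : ∀ k : ℕ, k ≤ q.length → ((⟨min k q.length, by omega⟩ : Fin (q.length + 1)) : ℕ) = k := by
      intro k hk; simp [min_eq_left hk]
    set idx : ℕ → Fin (q.length + 1) := fun k => ⟨min k q.length, by omega⟩ with hidxdef
    have hstep : ∀ k : ℕ, k < q.length → q (idx k) < q (idx (k+1)) := by
      intro k hk
      apply q.strictMono
      rw [Fin.lt_def]
      simp only [hidxdef]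
      omega
    let t : LTSeries (PrimeSpectrum R) := by
      refine ⟨m, fun i => if ExtP (q (idx i)) then resS (q (idx i)) else resS (q (idx (i+1))), ?_⟩
      intro i
      have him : (i : ℕ) < m := i.isLt
      have h01 := hstep i (by omega)
      have h12 := hstep (i+1) (by omega)
      have hcast : ((i.castSucc : Fin (m+1)) : ℕ) = (i : ℕ) := rfl
      have hsucc : ((i.succ : Fin (m+1)) : ℕ) = (i : ℕ) + 1 := rfl
      simp only [hcast, hsucc]
      by_cases h2 : ExtP (q (idx ((i : ℕ)+1)))
      · have h1 : ExtP (q (idx (i : ℕ))) := extP_of_lt_extP h01.le h2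
        rw [if_pos h1, if_pos h2]
        exact res_strict_of_extP h01 h1 h2
      · rw [if_neg h2]
        by_cases h1 : ExtP (q (idx (i : ℕ)))
        · rw [if_pos h1]
          exact lt_of_le_of_lt (resS_mono h01.le) (res_strict_of_not_extP h12 h2)
        · rw [if_neg h1]
          exact res_strict_of_not_extP h12 h2
    have hlen : (t.length : ℕ∞) ≤ ⨆ p : LTSeries (PrimeSpectrum R), (p.length : ℕ∞) :=
      le_iSup (fun p : LTSeries (PrimeSpectrum R) => (p.length : ℕ∞)) t
    have htl : t.length = m := rfl
    rw [htl] at hlen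
    push_cast
    exact add_le_add_left hlen 1

end Dim


lemma idealHeight_of_prime {A : Type*} [CommRing A] (I : Ideal A) (hI : I.IsPrime) :
    idealHeight I = Order.height (⟨I, hI⟩ : PrimeSpectrum A) := by
  refine le_antisymm ?_ ?_
  · exact iInf_le_of_le ⟨I, hI⟩ (iInf_le _ le_rfl)
  · refine le_iInf fun Q => le_iInf fun hQ =>
      Order.height_mono (show (⟨I, hI⟩ : PrimeSpectrum A) ≤ Q from hQ)

/-- For a finite dimensional Bézout domain `R`, `dim R[X] = dim R + 1`, and for every
prime ideal `P` of `R`, the extension `P R[X]` has the same height as `P`. -/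
theorem stmt_16 (R : Type*) [CommRing R] [IsDomain R] [IsBezout R]
    (hfin : ringKrullDim R ≠ ⊤) :
    ringKrullDim R[X] = ringKrullDim R + 1 ∧
      ∀ P : Ideal R, P.IsPrime →
        idealHeight (P.map (Polynomial.C : R →+* R[X])) = idealHeight P := by
  constructor
  · exact le_antisymm dim_le (dim_ge hfin)
  · intro P hP
    have h1 : idealHeight (P.map (Polynomial.C : R →+* R[X])) =
        Order.height (⟨P.map (Polynomial.C : R →+* R[X]),
          (Ideal.isPrime_map_C_iff_isPrime _).mpr hP⟩ : PrimeSpectrum R[X]) :=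
      idealHeight_of_prime _ _
    have h2 : idealHeight P = Order.height (⟨P, hP⟩ : PrimeSpectrum R) :=
      idealHeight_of_prime _ _
    rw [h1, h2]
    exact height_ext (⟨P, hP⟩ : PrimeSpectrum R)
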